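/- For every constant K > 0 there is a constant C = C(K) > 0 such that for every integer n ≥ 2 and every integer M with 1 ≤ M ≤ K·(log n)^2, the sum over m from M to n of r(n, m) is at most C·n·(log n)/M. (Here log denotes the natural logarithm.) -/

import Mathlib

/-- The sequence of quotients produced by the Euclidean algorithm run on `(n, d)`. -/
def euclidQuotients : ℕ → ℕ → List ℕ
  | _, 0 => []
  | n, d + 1 => n / (d + 1) :: euclidQuotients (d + 1) (n % (d + 1))
termination_by n d => d
decreasing_by exact Nat.mod_lt _ (Nat.succ_pos d)

/-- `r(n, m)`: the total number of occurrences of `m` among the quotient sequences of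
`(n, d)`, summed over all `d` with `1 ≤ d ≤ n - 1` and `gcd(d, n) = 1`. -/
def quotOcc (n m : ℕ) : ℕ :=
  ∑ d ∈ Finset.filter (fun d => Nat.gcd d n = 1) (Finset.Ico 1 n),
    (euclidQuotients n d).count m

structure Row where
  A : ℕ
  u : ℕ
  B : ℕ
  v : ℕ
  x : ℕ
  b : ℕ
deriving DecidableEq

structure M2 where
  a : ℕ
  b : ℕ
  c : ℕ
  d : ℕ
deriving DecidableEq

def M2.comp (m₁ m₂ : M2) : M2 :=
  ⟨m₁.a * m₂.a + m₁.b * m₂.c, m₁.a * m₂.b + m₁.b * m₂.d,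
   m₁.c * m₂.a + m₁.d * m₂.c, m₁.c * m₂.b + m₁.d * m₂.d⟩

def M2.one : M2 := ⟨1,0,0,1⟩

def rmat : List ℕ → M2
  | [] => M2.one
  | q :: t => ⟨q * (rmat t).a + (rmat t).b, (rmat t).a, q * (rmat t).c + (rmat t).d, (rmat t).c⟩

lemma M2.one_comp (m : M2) : M2.comp M2.one m = m := by
  cases m; simp [M2.comp, M2.one]

lemma M2.comp_assoc (m₁ m₂ m₃ : M2) : M2.comp (M2.comp m₁ m₂) m₃ = M2.comp m₁ (M2.comp m₂ m₃) := by
  cases m₁; cases m₂; cases m₃; simp only [M2.comp, M2.mk.injEq]; refine ⟨by ring, by ring, by ring, by ring⟩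

lemma rmat_cons (q : ℕ) (t : List ℕ) :
    rmat (q :: t) = M2.comp (rmat t) ⟨q, 1, 1, 0⟩ := by
  simp [rmat, M2.comp, Nat.mul_comm]

lemma rmat_append (l₁ l₂ : List ℕ) : rmat (l₁ ++ l₂) = M2.comp (rmat l₂) (rmat l₁) := by
  induction l₁ with
  | nil => simp [rmat, M2.comp, M2.one]
  | cons q t ih => rw [List.cons_append, rmat_cons, ih, rmat_cons, M2.comp_assoc]

def occData : ℕ → ℕ → ℕ → ℕ → ℕ → ℕ → List Row
  | _, _, _, _, _, 0 => []
  | A, u, B, v, x, b + 1 =>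
      ⟨A, u, B, v, x, b + 1⟩ ::
        occData (x / (b+1) * A + u) A (x / (b+1) * B + v) B (b + 1) (x % (b + 1))
termination_by A u B v x b => b
decreasing_by exact Nat.mod_lt _ (Nat.succ_pos b)

lemma occData_map_quot : ∀ b : ℕ, ∀ x A u B v : ℕ,
    (occData A u B v x b).map (fun r => r.x / r.b) = euclidQuotients x b := by
  intro b
  induction b using Nat.strong_induction_on with
  | _ b ih =>
    match b with
    | 0 => intro x A u B v; simp [occData, euclidQuotients]
    | b + 1 =>
      intro x A u B v
      rw [occData, euclidQuotients]
      simp only [List.map_cons]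
      rw [ih (x % (b+1)) (Nat.mod_lt _ (Nat.succ_pos b))]

lemma occData_inv {n dd : ℕ} : ∀ b : ℕ, ∀ x A u B v : ℕ,
    A * x + u * b = n → B * x + v * b = dd → Nat.gcd A u = 1 → Nat.gcd x b = 1 →
    u ≤ A → b ≤ x → 1 ≤ A →
    ∀ r ∈ occData A u B v x b,
      r.A * r.x + r.u * r.b = n ∧ r.B * r.x + r.v * r.b = dd ∧
      Nat.gcd r.A r.u = 1 ∧ Nat.gcd r.x r.b = 1 ∧
      r.u ≤ r.A ∧ r.b ≤ r.x ∧ 1 ≤ r.A ∧ 1 ≤ r.b := by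
  intro b
  induction b using Nat.strong_induction_on with
  | _ b ih =>
    match b with
    | 0 => intro x A u B v _ _ _ _ _ _ _ r hr; simp [occData] at hr
    | b + 1 =>
      intro x A u B v h1 h2 h3 h4 h5 h6 h7 r hr
      rw [occData] at hr
      rcases List.mem_cons.mp hr with rfl | hr
      · exact ⟨h1, h2, h3, h4, h5, h6, h7, Nat.succ_pos b⟩
      · set q := x / (b+1) with hq
        have hq1 : 1 ≤ q := (Nat.one_le_div_iff (Nat.succ_pos b)).mpr h6
        have hdm : (b+1) * q + x % (b+1) = x := Nat.div_add_mod x (b+1)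
        refine ih (x % (b+1)) (Nat.mod_lt _ (Nat.succ_pos b)) (b+1)
          (q * A + u) A (q * B + v) B ?_ ?_ ?_ ?_ ?_ ?_ ?_ r hr
        · calc (q * A + u) * (b+1) + A * (x % (b+1))
              = A * ((b+1) * q + x % (b+1)) + u * (b+1) := by ring
            _ = n := by rw [hdm]; exact h1
        · calc (q * B + v) * (b+1) + B * (x % (b+1))
              = B * ((b+1) * q + x % (b+1)) + v * (b+1) := by ring
            _ = dd := by rw [hdm]; exact h2
        · rw [Nat.add_comm, Nat.gcd_add_mul_right_left A u q, Nat.gcd_comm]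
          exact h3
        · rw [Nat.gcd_comm, ← Nat.gcd_rec, Nat.gcd_comm]
          exact h4
        · calc A = 1 * A := (one_mul A).symm
            _ ≤ q * A + u := by
              exact le_trans (Nat.mul_le_mul_right A hq1) (Nat.le_add_right _ _)
        · exact Nat.le_of_lt (Nat.mod_lt _ (Nat.succ_pos b))
        · exact le_trans h7 (le_trans (Nat.le_mul_of_pos_left A hq1) (Nat.le_add_right _ _))

lemma occData_b_le : ∀ b : ℕ, ∀ x A u B v : ℕ, ∀ r ∈ occData A u B v x b, r.b ≤ b := by
  intro b
  induction b using Nat.strong_induction_on with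
  | _ b ih =>
    match b with
    | 0 => intro x A u B v r hr; simp [occData] at hr
    | b + 1 =>
      intro x A u B v r hr
      rw [occData] at hr
      rcases List.mem_cons.mp hr with rfl | hr
      · exact le_refl _
      · exact le_trans (ih (x % (b+1)) (Nat.mod_lt _ (Nat.succ_pos b)) _ _ _ _ _ r hr)
          (Nat.le_of_lt (Nat.mod_lt _ (Nat.succ_pos b)))

lemma occData_nodup : ∀ b : ℕ, ∀ x A u B v : ℕ, (occData A u B v x b).Nodup := by
  intro b
  induction b using Nat.strong_induction_on with
  | _ b ih =>
    match b with
    | 0 => intro x A u B v; simp [occData]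
    | b + 1 =>
      intro x A u B v
      rw [occData]
      refine List.Nodup.cons ?_ (ih (x % (b+1)) (Nat.mod_lt _ (Nat.succ_pos b)) _ _ _ _ _)
      intro hmem
      have h1 := occData_b_le (x % (b+1)) (b+1) _ _ _ _ _ hmem
      have h2 := Nat.mod_lt x (Nat.succ_pos b)
      have h3 : (⟨A,u,B,v,x,b+1⟩ : Row).b = b + 1 := rfl
      rw [h3] at h1
      simp only [Nat.succ_eq_add_one] at h1 h2
      omega

lemma M2.comp_one (m : M2) : M2.comp m M2.one = m := by
  cases m; simp [M2.comp, M2.one]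

lemma rmat_single (q : ℕ) : rmat [q] = ⟨q, 1, 1, 0⟩ := by
  simp [rmat, M2.one]

lemma rmat_pos : ∀ l : List ℕ, (∀ q ∈ l, 1 ≤ q) →
    1 ≤ (rmat l).a ∧ (rmat l).b ≤ (rmat l).a := by
  intro l
  induction l with
  | nil => intro _; simp [rmat, M2.one]
  | cons q t ih =>
    intro h
    have ht := ih (fun p hp => h p (List.mem_cons_of_mem q hp))
    have hq : 1 ≤ q := h q List.mem_cons_self
    constructor
    · show 1 ≤ q * (rmat t).a + (rmat t).b
      have := Nat.mul_le_mul hq ht.1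
      omega
    · show (rmat t).a ≤ q * (rmat t).a + (rmat t).b
      have : 1 * (rmat t).a ≤ q * (rmat t).a := Nat.mul_le_mul_right _ hq
      omega

lemma rmat_b_zero : ∀ l : List ℕ, (∀ q ∈ l, 1 ≤ q) → (rmat l).b = 0 → l = [] := by
  intro l h hb
  cases l with
  | nil => rfl
  | cons q t =>
    exfalso
    have : (rmat (q :: t)).b = (rmat t).a := rfl
    have h1 := (rmat_pos t (fun p hp => h p (List.mem_cons_of_mem q hp))).1
    omega

lemma rmat_diag : ∀ l : List ℕ, (∀ q ∈ l, 1 ≤ q) → (rmat l).a = (rmat l).b → l = [1] := by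
  intro l h he
  cases l with
  | nil => simp [rmat, M2.one] at he
  | cons q t =>
    have ha : (rmat (q :: t)).a = q * (rmat t).a + (rmat t).b := rfl
    have hb : (rmat (q :: t)).b = (rmat t).a := rfl
    rw [ha, hb] at he
    have ht := rmat_pos t (fun p hp => h p (List.mem_cons_of_mem q hp))
    have hq : 1 ≤ q := h q List.mem_cons_self
    have hqa : (rmat t).a ≤ q * (rmat t).a := by
      have : 1 * (rmat t).a ≤ q * (rmat t).a := Nat.mul_le_mul_right _ hq
      omega
    have hb0 : (rmat t).b = 0 := by omega
    have hqea : q * (rmat t).a = 1 * (rmat t).a := by omega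
    have hq1 : q = 1 := Nat.eq_of_mul_eq_mul_right (by omega) hqea
    have ht0 : t = [] := rmat_b_zero t (fun p hp => h p (List.mem_cons_of_mem q hp)) hb0
    rw [hq1, ht0]

lemma occData_extract : ∀ b : ℕ, ∀ x A u B v : ℕ, b ≤ x →
    ∀ r ∈ occData A u B v x b,
      ∃ l : List ℕ, (∀ q ∈ l, 1 ≤ q) ∧
        (⟨r.A, r.u, r.B, r.v⟩ : M2) = M2.comp ⟨A, u, B, v⟩ (rmat l) ∧
        (l = [] ∨ l.getLast? = some (x / b)) := by
  intro b
  induction b using Nat.strong_induction_on with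
  | _ b ih =>
    match b with
    | 0 => intro x A u B v _ r hr; simp [occData] at hr
    | b + 1 =>
      intro x A u B v hbx r hr
      rw [occData] at hr
      rcases List.mem_cons.mp hr with rfl | hr
      · refine ⟨[], by simp, ?_, Or.inl rfl⟩
        rw [show rmat [] = M2.one from rfl, M2.comp_one]
      · set q := x / (b+1) with hqdef
        have hq1 : 1 ≤ q := (Nat.one_le_div_iff (Nat.succ_pos b)).mpr hbx
        obtain ⟨l', hl'1, hl'2, _⟩ :=
          ih (x % (b+1)) (Nat.mod_lt _ (Nat.succ_pos b)) (b+1)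
            (q * A + u) A (q * B + v) B
            (Nat.le_of_lt (Nat.mod_lt _ (Nat.succ_pos b))) r hr
        refine ⟨l' ++ [q], ?_, ?_, Or.inr (List.getLast?_concat (l := l'))⟩
        · intro p hp
          rcases List.mem_append.mp hp with hp | hp
          · exact hl'1 p hp
          · simp at hp; omega
        · have hseed : (⟨q * A + u, A, q * B + v, B⟩ : M2)
              = M2.comp ⟨A, u, B, v⟩ ⟨q, 1, 1, 0⟩ := by
            simp [M2.comp, Nat.mul_comm]
          rw [hl'2, hseed, M2.comp_assoc, rmat_append, rmat_single]

lemma rmat_uniq : ∀ N : ℕ, ∀ u : ℕ, ∀ l₁ l₂ : List ℕ,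
    (∀ q ∈ l₁, 1 ≤ q) → (∀ q ∈ l₂, 1 ≤ q) →
    (rmat l₁).a = N → (rmat l₂).a = N → (rmat l₁).b = u → (rmat l₂).b = u →
    ((l₁.getLast? = some 1) ↔ (l₂.getLast? = some 1)) → l₁ = l₂ := by
  intro N
  induction N using Nat.strong_induction_on with
  | _ N ihN =>
    intro u l₁ l₂ h1 h2 ha1 ha2 hb1 hb2 hflag
    rcases Nat.eq_zero_or_pos u with hu0 | hu
    · rw [rmat_b_zero l₁ h1 (hu0 ▸ hb1), rmat_b_zero l₂ h2 (hu0 ▸ hb2)]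
    · match l₁, l₂ with
      | [], _ => exact absurd hb1 (by simp [rmat, M2.one]; omega)
      | _ :: _, [] => exact absurd hb2 (by simp [rmat, M2.one]; omega)
      | q₁ :: t₁, q₂ :: t₂ =>
        have ht₁ : ∀ p ∈ t₁, 1 ≤ p := fun p hp => h1 p (List.mem_cons_of_mem _ hp)
        have ht₂ : ∀ p ∈ t₂, 1 ≤ p := fun p hp => h2 p (List.mem_cons_of_mem _ hp)
        have hq₁ : 1 ≤ q₁ := h1 q₁ List.mem_cons_self
        have hq₂ : 1 ≤ q₂ := h2 q₂ List.mem_cons_self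
        have ea1 : q₁ * (rmat t₁).a + (rmat t₁).b = N := ha1
        have ea2 : q₂ * (rmat t₂).a + (rmat t₂).b = N := ha2
        have eb1 : (rmat t₁).a = u := hb1
        have eb2 : (rmat t₂).a = u := hb2
        have hp₁ := rmat_pos t₁ ht₁
        have hp₂ := rmat_pos t₂ ht₂
        set e₁ := (rmat t₁).b with he₁
        set e₂ := (rmat t₂).b with he₂
        have he₁u : e₁ ≤ u := eb1 ▸ hp₁.2
        have he₂u : e₂ ≤ u := eb2 ▸ hp₂.2
        rcases Nat.lt_or_ge u 2 with hu2 | hu2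
        · -- u = 1
          have hu1 : u = 1 := by omega
          subst hu1
          have key : ∀ (t : List ℕ), (∀ p ∈ t, 1 ≤ p) → (rmat t).a = 1 →
              (rmat t).b = 0 ∧ t = [] ∨ (rmat t).b = 1 ∧ t = [1] := by
            intro t ht hta
            rcases Nat.eq_zero_or_pos (rmat t).b with h0 | h0
            · exact Or.inl ⟨h0, rmat_b_zero t ht h0⟩
            · have hbb : (rmat t).b = 1 := by
                have := (rmat_pos t ht).2
                omega
              exact Or.inr ⟨hbb, rmat_diag t ht (by omega)⟩
          have r1 : (rmat ([] : List ℕ)).a = 1 := rfl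
          have r2 : (rmat [1]).a = 1 := rfl
          have r3 : (rmat ([] : List ℕ)).b = 0 := rfl
          have r4 : (rmat [1]).b = 1 := rfl
          rcases key t₁ ht₁ eb1 with ⟨hz1, ht1e⟩ | ⟨hz1, ht1e⟩ <;>
            rcases key t₂ ht₂ eb2 with ⟨hz2, ht2e⟩ | ⟨hz2, ht2e⟩
          · subst ht1e; subst ht2e
            simp only [r1, r2, Nat.mul_one] at ea1 ea2
            have : q₁ = q₂ := by omega
            rw [this]
          · -- t₁ = [], t₂ = [1] : l₁ = [q₁], l₂ = [q₂, 1]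
            exfalso
            subst ht1e; subst ht2e
            simp only [r1, r2, Nat.mul_one] at ea1 ea2
            have hflag2 : (q₂ :: [1]).getLast? = some 1 := rfl
            have hflag1 := hflag.mpr hflag2
            have : q₁ = 1 := by simpa using hflag1
            omega
          · exfalso
            subst ht1e; subst ht2e
            simp only [r1, r2, Nat.mul_one] at ea1 ea2
            have hflag1 : (q₁ :: [1]).getLast? = some 1 := rfl
            have hflag2 := hflag.mp hflag1
            have : q₂ = 1 := by simpa using hflag2
            omega
          · subst ht1e; subst ht2e
            simp only [r1, r2, Nat.mul_one] at ea1 ea2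
            have : q₁ = q₂ := by omega
            rw [this]
        · -- u ≥ 2
          have hne₁ : t₁ ≠ [] := by
            intro h; rw [h] at eb1; simp [rmat, M2.one] at eb1; omega
          have hne₂ : t₂ ≠ [] := by
            intro h; rw [h] at eb2; simp [rmat, M2.one] at eb2; omega
          have he₁lt : e₁ < u := by
            rcases Nat.lt_or_ge e₁ u with h | h
            · exact h
            · exfalso
              have : (rmat t₁).a = (rmat t₁).b := by omega
              have := rmat_diag t₁ ht₁ this
              rw [this] at eb1
              simp [rmat_single] at eb1
              omega
          have he₂lt : e₂ < u := by
            rcases Nat.lt_or_ge e₂ u with h | h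
            · exact h
            · exfalso
              have : (rmat t₂).a = (rmat t₂).b := by omega
              have := rmat_diag t₂ ht₂ this
              rw [this] at eb2
              simp [rmat_single] at eb2
              omega
          have hmod1 : N % u = e₁ := by
            rw [← ea1, eb1, Nat.mul_comm, Nat.mul_add_mod]
            exact Nat.mod_eq_of_lt he₁lt
          have hmod2 : N % u = e₂ := by
            rw [← ea2, eb2, Nat.mul_comm, Nat.mul_add_mod]
            exact Nat.mod_eq_of_lt he₂lt
          have hee : e₁ = e₂ := by omega
          have hqq : q₁ = q₂ := by
            have : q₁ * u = q₂ * u := by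
              rw [eb1] at ea1; rw [eb2] at ea2; omega
            exact Nat.eq_of_mul_eq_mul_right (by omega) this
          have he₁pos : 1 ≤ e₁ := by
            rcases Nat.eq_zero_or_pos e₁ with h | h
            · exact absurd (rmat_b_zero t₁ ht₁ (he₁ ▸ h)) hne₁
            · exact h
          have hult : u < N := by
            have : 1 * u ≤ q₁ * u := Nat.mul_le_mul_right _ hq₁
            rw [eb1] at ea1
            omega
          have htflag : ((t₁.getLast? = some 1) ↔ (t₂.getLast? = some 1)) := by
            have g1 : (q₁ :: t₁).getLast? = t₁.getLast? := by
              cases t₁ with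
              | nil => exact absurd rfl hne₁
              | cons c t => exact List.getLast?_cons_cons
            have g2 : (q₂ :: t₂).getLast? = t₂.getLast? := by
              cases t₂ with
              | nil => exact absurd rfl hne₂
              | cons c t => exact List.getLast?_cons_cons
            rw [g1, g2] at hflag
            exact hflag
          have := ihN u hult e₁ t₁ t₂ ht₁ ht₂ eb1 eb2 he₁.symm (hee ▸ he₂.symm) htflag
          rw [this, hqq]

lemma ucount (A b c : ℕ) (hA : 1 ≤ A) :
    ((Finset.range (A+1)).filter (fun u => u * b % A = c)).card ≤ Nat.gcd A b + 1 := by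
  set g := Nat.gcd A b with hg
  have hgpos : 0 < g := Nat.gcd_pos_of_pos_left b hA
  have hgA : g ∣ A := Nat.gcd_dvd_left A b
  have hgb : g ∣ b := Nat.gcd_dvd_right A b
  set s := A / g with hs
  have hspos : 0 < s := Nat.div_pos (Nat.le_of_dvd hA hgA) hgpos
  have hAs : A / s = g := Nat.div_div_self hgA (by omega)
  have key : ∀ u₁ ∈ (Finset.range (A+1)).filter (fun u => u * b % A = c),
      ∀ u₂ ∈ (Finset.range (A+1)).filter (fun u => u * b % A = c),
      u₁ < u₂ → u₁ / s < u₂ / s := by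
    intro u₁ h₁ u₂ h₂ hlt
    simp only [Finset.mem_filter, Finset.mem_range] at h₁ h₂
    have hmod : (u₁ * b) % A = (u₂ * b) % A := by rw [h₁.2, h₂.2]
    have hdvd : A ∣ u₂ * b - u₁ * b :=
      (Nat.modEq_iff_dvd' (Nat.mul_le_mul_right b (Nat.le_of_lt hlt))).mp hmod
    have hsub : u₂ * b - u₁ * b = (u₂ - u₁) * b := (Nat.sub_mul u₂ u₁ b).symm
    rw [hsub] at hdvd
    have hb' : b = g * (b / g) := (Nat.mul_div_cancel' hgb).symm
    have hA' : A = g * s := (Nat.mul_div_cancel' hgA).symm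
    have hdvd2 : g * s ∣ g * ((u₂ - u₁) * (b / g)) := by
      rw [← hA']
      calc A ∣ (u₂ - u₁) * b := hdvd
        _ = g * ((u₂ - u₁) * (b / g)) := by
              rw [show g * ((u₂ - u₁) * (b / g)) = (u₂ - u₁) * (g * (b / g)) by ring,
                Nat.mul_div_cancel' hgb]
    have hdvd3 : s ∣ (u₂ - u₁) * (b / g) := (mul_dvd_mul_iff_left (by omega : g ≠ 0)).mp hdvd2
    have hco : Nat.Coprime s (b / g) := Nat.coprime_div_gcd_div_gcd hgpos
    have hdvd4 : s ∣ u₂ - u₁ := hco.dvd_of_dvd_mul_right hdvd3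
    have hge : u₁ + s ≤ u₂ := by
      have := Nat.le_of_dvd (by omega) hdvd4
      omega
    calc u₁ / s < u₁ / s + 1 := Nat.lt_succ_self _
      _ = (u₁ + s) / s := (Nat.add_div_right u₁ hspos).symm
      _ ≤ u₂ / s := Nat.div_le_div_right hge
  have hinj : Set.InjOn (· / s)
      ↑((Finset.range (A+1)).filter (fun u => u * b % A = c)) := by
    intro u₁ h₁ u₂ h₂ hx
    by_contra hne
    rcases Nat.lt_or_ge u₁ u₂ with h | h
    · exact absurd hx (Nat.ne_of_lt (key u₁ h₁ u₂ h₂ h))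
    · have : u₂ < u₁ := by omega
      exact absurd hx.symm (Nat.ne_of_lt (key u₂ h₂ u₁ h₁ this))
  calc ((Finset.range (A+1)).filter (fun u => u * b % A = c)).card
      ≤ (Finset.range (g+1)).card := by
        apply Finset.card_le_card_of_injOn (· / s) ?_ hinj
        intro u hu
        simp only [Finset.mem_coe, Finset.mem_filter, Finset.mem_range] at hu
        simp only [Finset.mem_coe, Finset.mem_range]
        have : u / s ≤ A / s := Nat.div_le_div_right (by omega)
        omega
    _ = g + 1 := Finset.card_range _

lemma bcount (n M A : ℕ) (hA : 1 ≤ A) (hM : 1 ≤ M) (hn : 1 ≤ n) :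
    ((Finset.Icc 1 n).filter (fun b => M * A * b ≤ n ∧ Nat.gcd A b = Nat.gcd A n)).card
      ≤ n / (M * A) / (Nat.gcd A n) := by
  have hhpos : 0 < Nat.gcd A n := Nat.gcd_pos_of_pos_left n hA
  have hMA : 0 < M * A := Nat.mul_pos hM hA
  have hmap : ∀ b ∈ (Finset.Icc 1 n).filter
      (fun b => M * A * b ≤ n ∧ Nat.gcd A b = Nat.gcd A n),
      b / (Nat.gcd A n) ∈ Finset.Icc 1 (n / (M * A) / (Nat.gcd A n)) := by
    intro b hb
    simp only [Finset.mem_filter, Finset.mem_Icc] at hb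
    obtain ⟨⟨hb1, _⟩, hMab, hgcd⟩ := hb
    have hdvd : Nat.gcd A n ∣ b := by rw [← hgcd]; exact Nat.gcd_dvd_right A b
    have hhb : Nat.gcd A n ≤ b := Nat.le_of_dvd (by omega) hdvd
    simp only [Finset.mem_Icc]
    refine ⟨(Nat.one_le_div_iff hhpos).mpr hhb, ?_⟩
    apply Nat.div_le_div_right
    exact (Nat.le_div_iff_mul_le hMA).mpr (by rw [Nat.mul_comm]; exact hMab)
  have hinj : Set.InjOn (· / (Nat.gcd A n))
      ↑((Finset.Icc 1 n).filter (fun b => M * A * b ≤ n ∧ Nat.gcd A b = Nat.gcd A n)) := by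
    intro b₁ h₁ b₂ h₂ hx
    simp only [Finset.coe_filter, Set.mem_setOf_eq, Finset.mem_Icc] at h₁ h₂
    have hd₁ : Nat.gcd A n ∣ b₁ := by rw [← h₁.2.2]; exact Nat.gcd_dvd_right A b₁
    have hd₂ : Nat.gcd A n ∣ b₂ := by rw [← h₂.2.2]; exact Nat.gcd_dvd_right A b₂
    have hx' : b₁ / Nat.gcd A n = b₂ / Nat.gcd A n := hx
    calc b₁ = b₁ / Nat.gcd A n * Nat.gcd A n := (Nat.div_mul_cancel hd₁).symm
      _ = b₂ / Nat.gcd A n * Nat.gcd A n := by rw [hx']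
      _ = b₂ := Nat.div_mul_cancel hd₂
  calc ((Finset.Icc 1 n).filter (fun b => M * A * b ≤ n ∧ Nat.gcd A b = Nat.gcd A n)).card
      ≤ (Finset.Icc 1 (n / (M * A) / (Nat.gcd A n))).card :=
        Finset.card_le_card_of_injOn (· / (Nat.gcd A n)) hmap hinj
    _ ≤ n / (M * A) / (Nat.gcd A n) := by simp [Nat.card_Icc]

lemma sum_count_le (M n : ℕ) (l : List ℕ) :
    ∑ m ∈ Finset.Icc M n, l.count m ≤ l.countP (fun q => decide (M ≤ q)) := by
  induction l with
  | nil => simp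
  | cons a t ih =>
    rw [List.countP_cons]
    have key : ∑ m ∈ Finset.Icc M n, (a :: t).count m
        = (∑ m ∈ Finset.Icc M n, t.count m) + (if a ∈ Finset.Icc M n then 1 else 0) := by
      simp only [List.count_cons]
      rw [Finset.sum_add_distrib]
      congr 1
      simp only [beq_iff_eq]
      rw [Finset.sum_ite_eq (Finset.Icc M n) a (fun _ => 1)]
    rw [key]
    have h1 : (if a ∈ Finset.Icc M n then 1 else 0)
        ≤ (if (decide (M ≤ a) : Bool) = true then 1 else 0) := by
      by_cases hmem : a ∈ Finset.Icc M n
      · have : M ≤ a := (Finset.mem_Icc.mp hmem).1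
        simp [hmem, this]
      · simp [hmem]
    omega

def predM (M : ℕ) (r : Row) : Bool := decide (M ≤ r.x / r.b)

def occS (n M d : ℕ) : Finset Row := ((occData 1 0 0 1 n d).filter (predM M)).toFinset

lemma occS_card (n M d : ℕ) :
    (occS n M d).card = (euclidQuotients n d).countP (fun q => decide (M ≤ q)) := by
  rw [occS, List.toFinset_card_of_nodup ((occData_nodup d n 1 0 0 1).filter _)]
  rw [← List.countP_eq_length_filter]
  rw [← occData_map_quot d n 1 0 0 1, List.countP_map]
  rfl

lemma occS_mem_occData {n M d : ℕ} {r : Row} (hr : r ∈ occS n M d) :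
    r ∈ occData 1 0 0 1 n d ∧ M ≤ r.x / r.b := by
  rw [occS, List.mem_toFinset, List.mem_filter] at hr
  refine ⟨hr.1, ?_⟩
  have := hr.2
  rwa [predM, decide_eq_true_eq] at this

lemma occS_facts {n M d : ℕ} (hd1 : 1 ≤ d) (hdn : d < n) (hgcd : Nat.gcd d n = 1) {r : Row}
    (hr : r ∈ occS n M d) :
    r.A * r.x + r.u * r.b = n ∧ r.B * r.x + r.v * r.b = d ∧ Nat.gcd r.A r.u = 1 ∧
    Nat.gcd r.x r.b = 1 ∧ r.u ≤ r.A ∧ r.b ≤ r.x ∧ 1 ≤ r.A ∧ 1 ≤ r.b ∧ M ≤ r.x / r.b := by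
  obtain ⟨hmem, hM⟩ := occS_mem_occData hr
  have := occData_inv (n := n) (dd := d) d n 1 0 0 1 (by omega) (by omega) (by simp)
    (by rw [Nat.gcd_comm]; exact hgcd) (by omega) (by omega) (by omega) r hmem
  exact ⟨this.1, this.2.1, this.2.2.1, this.2.2.2.1, this.2.2.2.2.1, this.2.2.2.2.2.1,
    this.2.2.2.2.2.2.1, this.2.2.2.2.2.2.2, hM⟩

lemma occS_extract {n M d : ℕ} (hdn : d ≤ n) {r : Row} (hr : r ∈ occS n M d) :
    ∃ l : List ℕ, (∀ q ∈ l, 1 ≤ q) ∧ r.A = (rmat l).a ∧ r.u = (rmat l).b ∧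
      r.B = (rmat l).c ∧ r.v = (rmat l).d ∧ (l = [] ∨ l.getLast? = some (n / d)) := by
  obtain ⟨hmem, _⟩ := occS_mem_occData hr
  obtain ⟨l, hl1, hl2, hl3⟩ := occData_extract d n 1 0 0 1 hdn r hmem
  rw [show ({ a := 1, b := 0, c := 0, d := 1} : M2) = M2.one from rfl, M2.one_comp] at hl2
  refine ⟨l, hl1, ?_, ?_, ?_, ?_, hl3⟩ <;>
    (first
      | exact congrArg M2.a hl2
      | exact congrArg M2.b hl2
      | exact congrArg M2.c hl2
      | exact congrArg M2.d hl2)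

def Dset (n : ℕ) : Finset ℕ := (Finset.Ico 1 n).filter (fun d => Nat.gcd d n = 1)

def Tset (n M : ℕ) : Finset (ℕ × ℕ × ℕ) :=
  ((Finset.Icc 1 n) ×ˢ (Finset.range (n+1)) ×ˢ (Finset.Icc 1 n)).filter
    (fun p => p.2.1 ≤ p.1 ∧ M * p.1 * p.2.2 ≤ n ∧
      Nat.gcd p.1 p.2.2 = Nat.gcd p.1 n ∧ p.2.1 * p.2.2 % p.1 = n % p.1)

lemma sigma_card_le (n M : ℕ) (hM : 1 ≤ M) :
    ∑ d ∈ Dset n, (occS n M d).card ≤ 2 * (Tset n M).card := by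
  rw [← Finset.card_sigma]
  have hcard := Finset.card_le_card_of_injOn
    (f := fun p : (Σ _ : ℕ, Row) => ((p.2.A, p.2.u, p.2.b), decide (n / p.1 = 1)))
    (s := (Dset n).sigma (fun d => occS n M d))
    (t := (Tset n M) ×ˢ (Finset.univ : Finset Bool)) ?_ ?_
  · calc ((Dset n).sigma (fun d => occS n M d)).card
        ≤ ((Tset n M) ×ˢ (Finset.univ : Finset Bool)).card := hcard
      _ = (Tset n M).card * 2 := by
          rw [Finset.card_product, Finset.card_univ]
          simp
      _ = 2 * (Tset n M).card := Nat.mul_comm _ _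
  · -- maps to
    intro p hp
    obtain ⟨d, r⟩ := p
    rw [Finset.mem_coe, Finset.mem_sigma] at hp
    obtain ⟨hd, hr⟩ := hp
    dsimp only at hd hr ⊢
    rw [Dset, Finset.mem_filter, Finset.mem_Ico] at hd
    obtain ⟨⟨hd1, hdn⟩, hdg⟩ := hd
    obtain ⟨heq1, heq2, hgAu, hgxb, huA, hbx, hA1, hb1, hMle⟩ :=
      occS_facts hd1 hdn hdg hr
    have hx1 : 1 ≤ r.x := le_trans hb1 hbx
    have hAx : r.A ≤ r.A * r.x := Nat.le_mul_of_pos_right _ hx1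
    have hxx : r.x ≤ r.A * r.x := Nat.le_mul_of_pos_left _ hA1
    have hMb : M * r.b ≤ r.x := (Nat.le_div_iff_mul_le hb1).mp hMle
    have hMAb : M * r.A * r.b ≤ n := by
      calc M * r.A * r.b = r.A * (M * r.b) := by ring
        _ ≤ r.A * r.x := Nat.mul_le_mul_left _ hMb
        _ ≤ n := by omega
    have hgg : Nat.gcd r.A r.b = Nat.gcd r.A n := by
      apply Nat.dvd_antisymm
      · apply Nat.dvd_gcd (Nat.gcd_dvd_left _ _)
        have : Nat.gcd r.A r.b ∣ r.A * r.x + r.u * r.b :=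
          Nat.dvd_add (Dvd.dvd.mul_right (Nat.gcd_dvd_left _ _) _)
            (Dvd.dvd.mul_left (Nat.gcd_dvd_right _ _) _)
        rwa [heq1] at this
      · apply Nat.dvd_gcd (Nat.gcd_dvd_left _ _)
        have hub : r.u * r.b = n - r.A * r.x := by omega
        have h3 : Nat.gcd r.A n ∣ r.u * r.b := by
          rw [hub]
          exact Nat.dvd_sub (Nat.gcd_dvd_right _ _)
            (Dvd.dvd.mul_right (Nat.gcd_dvd_left _ _) _)
        have hcop : Nat.Coprime (Nat.gcd r.A n) r.u :=
          Nat.Coprime.coprime_dvd_left (Nat.gcd_dvd_left _ _) hgAu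
        exact hcop.dvd_of_dvd_mul_left h3
    have hmod : r.u * r.b % r.A = n % r.A := by
      conv_rhs => rw [← heq1]
      rw [Nat.mul_add_mod]
    have hgoal : ((r.A, r.u, r.b) : ℕ × ℕ × ℕ) ∈ Tset n M := by
      rw [Tset, Finset.mem_filter, Finset.mem_product, Finset.mem_product]
      dsimp only
      refine ⟨⟨?_, ?_, ?_⟩, huA, hMAb, hgg, hmod⟩
      · rw [Finset.mem_Icc]; omega
      · rw [Finset.mem_range]; omega
      · rw [Finset.mem_Icc]; omega
    exact Finset.mem_product.mpr ⟨hgoal, Finset.mem_univ _⟩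
  · -- injective
    intro p hp q hq heq
    obtain ⟨d, r⟩ := p
    obtain ⟨e, s⟩ := q
    simp only [Finset.mem_coe, Finset.mem_sigma] at hp hq
    obtain ⟨hd, hr⟩ := hp
    obtain ⟨he, hs⟩ := hq
    rw [Dset, Finset.mem_filter, Finset.mem_Ico] at hd he
    obtain ⟨⟨hd1, hdn⟩, hdg⟩ := hd
    obtain ⟨⟨he1, hen⟩, heg⟩ := he
    simp only [Prod.mk.injEq] at heq
    obtain ⟨⟨hAeq, hueq, hbeq⟩, hflag⟩ := heq
    obtain ⟨heq1, heq2, hgAu, hgxb, huA, hbx, hA1, hb1, hMle⟩ := occS_facts hd1 hdn hdg hr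
    obtain ⟨heq1', heq2', hgAu', hgxb', huA', hbx', hA1', hb1', hMle'⟩ := occS_facts he1 hen heg hs
    rw [← hAeq] at heq1' hA1'
    rw [← hueq, ← hbeq] at heq1'
    have hxeq : r.x = s.x := by
      have h1 : r.A * r.x = r.A * s.x := by omega
      exact Nat.eq_of_mul_eq_mul_left (by omega) h1
    obtain ⟨l₁, hl₁q, ha₁, hb₁, hc₁, hd₁', hlast₁⟩ := occS_extract (Nat.le_of_lt hdn) hr
    obtain ⟨l₂, hl₂q, ha₂, hb₂, hc₂, hd₂', hlast₂⟩ := occS_extract (Nat.le_of_lt hen) hs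
    have hleq : l₁ = l₂ := by
      rcases Nat.eq_zero_or_pos r.u with hu0 | hupos
      · have e₁ : l₁ = [] := rmat_b_zero l₁ hl₁q (by rw [← hb₁, hu0])
        have e₂ : l₂ = [] := rmat_b_zero l₂ hl₂q (by rw [← hb₂, ← hueq, hu0])
        rw [e₁, e₂]
      · have hne₁ : l₁ ≠ [] := by
          intro h
          rw [h] at hb₁
          simp [rmat, M2.one] at hb₁
          omega
        have hne₂ : l₂ ≠ [] := by
          intro h
          rw [h] at hb₂
          simp [rmat, M2.one] at hb₂
          omega
        have hl₁last : l₁.getLast? = some (n / d) := by tauto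
        have hl₂last : l₂.getLast? = some (n / e) := by tauto
        have hiff : (n / d = 1) ↔ (n / e = 1) := by
          constructor <;> intro h <;>
            [skip; skip] <;> first
            | (apply of_decide_eq_true; rw [← hflag]; exact decide_eq_true h)
            | (apply of_decide_eq_true; rw [hflag]; exact decide_eq_true h)
        have hflag2 : (l₁.getLast? = some 1) ↔ (l₂.getLast? = some 1) := by
          rw [hl₁last, hl₂last]
          constructor <;> intro h
          · have := Option.some_injective _ h
            exact congrArg some (hiff.mp this)
          · have := Option.some_injective _ h
            exact congrArg some (hiff.mpr this)
        exact rmat_uniq ((rmat l₁).a) ((rmat l₁).b) l₁ l₂ hl₁q hl₂q rfl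
          (by rw [← ha₂, ← hAeq, ha₁]) rfl (by rw [← hb₂, ← hueq, hb₁]) hflag2
    have hBeq : r.B = s.B := by rw [hc₁, hc₂, hleq]
    have hveq : r.v = s.v := by rw [hd₁', hd₂', hleq]
    have hde : d = e := by
      rw [← heq2, ← heq2', hBeq, hveq, hxeq, hbeq]
    subst hde
    have hrs : r = s := by
      cases r; cases s
      simp only [Row.mk.injEq]
      exact ⟨hAeq, hueq, hBeq, hveq, hxeq, hbeq⟩
    rw [hrs]

lemma tset_card_le (n M : ℕ) (hM : 1 ≤ M) (hn : 1 ≤ n) :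
    (Tset n M).card ≤ ∑ A ∈ Finset.Icc 1 n, 2 * (n / (M * A)) := by
  classical
  set pairs : ℕ → Finset (ℕ × ℕ) := fun A =>
    ((Finset.range (n+1)) ×ˢ (Finset.Icc 1 n)).filter
      (fun w => w.1 ≤ A ∧ M * A * w.2 ≤ n ∧ Nat.gcd A w.2 = Nat.gcd A n ∧
        w.1 * w.2 % A = n % A) with hpairs
  have hsub : Tset n M ⊆ (Finset.Icc 1 n).biUnion (fun A => {A} ×ˢ pairs A) := by
    intro p hp
    rw [Tset, Finset.mem_filter, Finset.mem_product, Finset.mem_product] at hp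
    obtain ⟨⟨hA, hu, hb⟩, hc⟩ := hp
    rw [Finset.mem_biUnion]
    refine ⟨p.1, hA, ?_⟩
    rw [Finset.mem_product]
    refine ⟨Finset.mem_singleton_self _, ?_⟩
    rw [hpairs]
    rw [Finset.mem_filter, Finset.mem_product]
    exact ⟨⟨hu, hb⟩, hc⟩
  have hpaircard : ∀ A ∈ Finset.Icc 1 n, (pairs A).card ≤ 2 * (n / (M * A)) := by
    intro A hA
    rw [Finset.mem_Icc] at hA
    have hA1 : 1 ≤ A := hA.1
    have hgpos : 0 < Nat.gcd A n := Nat.gcd_pos_of_pos_left n hA1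
    set Bset : Finset ℕ := (Finset.Icc 1 n).filter
      (fun b => M * A * b ≤ n ∧ Nat.gcd A b = Nat.gcd A n) with hBset
    set Uset : ℕ → Finset ℕ := fun b =>
      (Finset.range (A+1)).filter (fun u => u * b % A = n % A) with hUset
    have hsub2 : pairs A ⊆ Bset.biUnion (fun b => (Uset b) ×ˢ {b}) := by
      intro w hw
      rw [hpairs, Finset.mem_filter, Finset.mem_product] at hw
      obtain ⟨⟨hwu, hwb⟩, h1, h2, h3, h4⟩ := hw
      rw [Finset.mem_biUnion]
      refine ⟨w.2, ?_, ?_⟩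
      · rw [hBset, Finset.mem_filter]
        exact ⟨hwb, h2, h3⟩
      · rw [Finset.mem_product, hUset]
        refine ⟨?_, Finset.mem_singleton_self _⟩
        rw [Finset.mem_filter, Finset.mem_range]
        exact ⟨by omega, h4⟩
    calc (pairs A).card ≤ (Bset.biUnion (fun b => (Uset b) ×ˢ {b})).card :=
          Finset.card_le_card hsub2
      _ ≤ ∑ b ∈ Bset, ((Uset b) ×ˢ ({b} : Finset ℕ)).card := Finset.card_biUnion_le
      _ = ∑ b ∈ Bset, (Uset b).card := by
          apply Finset.sum_congr rfl
          intro b _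
          rw [Finset.card_product, Finset.card_singleton, Nat.mul_one]
      _ ≤ ∑ b ∈ Bset, (Nat.gcd A n + 1) := by
          apply Finset.sum_le_sum
          intro b hb
          rw [hBset, Finset.mem_filter] at hb
          have := ucount A b (n % A) hA1
          rw [hb.2.2] at this
          exact this
      _ = (Nat.gcd A n + 1) * Bset.card := by rw [Finset.sum_const, smul_eq_mul, Nat.mul_comm]
      _ ≤ (Nat.gcd A n + 1) * (n / (M * A) / (Nat.gcd A n)) := by
          apply Nat.mul_le_mul_left
          exact bcount n M A hA1 hM hn
      _ ≤ 2 * (n / (M * A)) := by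
          set h := Nat.gcd A n
          set y := n / (M * A)
          calc (h + 1) * (y / h) ≤ (2 * h) * (y / h) := Nat.mul_le_mul_right _ (by omega)
            _ = 2 * ((y / h) * h) := by ring
            _ ≤ 2 * y := Nat.mul_le_mul_left 2 (Nat.div_mul_le_self y h)
  calc (Tset n M).card ≤ ((Finset.Icc 1 n).biUnion (fun A => {A} ×ˢ pairs A)).card :=
        Finset.card_le_card hsub
    _ ≤ ∑ A ∈ Finset.Icc 1 n, ({A} ×ˢ pairs A).card := Finset.card_biUnion_le
    _ = ∑ A ∈ Finset.Icc 1 n, (pairs A).card := by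
        apply Finset.sum_congr rfl
        intro A _
        rw [Finset.card_product, Finset.card_singleton, Nat.one_mul]
    _ ≤ ∑ A ∈ Finset.Icc 1 n, 2 * (n / (M * A)) := Finset.sum_le_sum hpaircard

lemma main_nat (n M : ℕ) (hM : 1 ≤ M) (hn : 2 ≤ n) :
    (∑ m ∈ Finset.Icc M n, quotOcc n m) ≤ 4 * ∑ A ∈ Finset.Icc 1 n, (n / (M * A)) := by
  have hswap : ∑ m ∈ Finset.Icc M n, quotOcc n m
      = ∑ d ∈ Dset n, ∑ m ∈ Finset.Icc M n, (euclidQuotients n d).count m := by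
    unfold quotOcc Dset
    rw [Finset.sum_comm]
  rw [hswap]
  calc ∑ d ∈ Dset n, ∑ m ∈ Finset.Icc M n, (euclidQuotients n d).count m
      ≤ ∑ d ∈ Dset n, (euclidQuotients n d).countP (fun q => decide (M ≤ q)) :=
        Finset.sum_le_sum (fun d _ => sum_count_le M n _)
    _ = ∑ d ∈ Dset n, (occS n M d).card := by
        apply Finset.sum_congr rfl
        intro d _
        rw [occS_card]
    _ ≤ 2 * (Tset n M).card := sigma_card_le n M hM
    _ ≤ 2 * ∑ A ∈ Finset.Icc 1 n, 2 * (n / (M * A)) :=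
        Nat.mul_le_mul_left 2 (tset_card_le n M hM (by omega))
    _ = 4 * ∑ A ∈ Finset.Icc 1 n, (n / (M * A)) := by
        rw [Finset.mul_sum, Finset.mul_sum]
        apply Finset.sum_congr rfl
        intro A _
        ring


/-- For every constant `K > 0` there is a constant `C = C(K) > 0` such that for every
integer `n ≥ 2` and every integer `M` with `1 ≤ M ≤ K·(log n)²`, we have
`∑_{m = M}^{n} r(n, m) ≤ C·n·(log n)/M`. -/
theorem statement4 (K : ℝ) (hK : 0 < K) :
    ∃ C : ℝ, 0 < C ∧ ∀ n : ℕ, 2 ≤ n → ∀ M : ℕ, 1 ≤ M →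
      (M : ℝ) ≤ K * (Real.log n) ^ 2 →
      ((∑ m ∈ Finset.Icc M n, quotOcc n m : ℕ) : ℝ) ≤ C * n * Real.log n / M := by
  refine ⟨16, by norm_num, ?_⟩
  intro n hn M hM _
  have hnat := main_nat n M hM hn
  have hMpos : (0:ℝ) < M := by exact_mod_cast hM
  have hnpos : (0:ℝ) < n := by positivity
  have hlog2 : Real.log 2 ≤ Real.log n := by
    apply Real.log_le_log (by norm_num)
    exact_mod_cast hn
  have hlogpos : 0 < Real.log n := by
    have := Real.log_two_gt_d9
    linarith
  calc ((∑ m ∈ Finset.Icc M n, quotOcc n m : ℕ) : ℝ)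
      ≤ ((4 * ∑ A ∈ Finset.Icc 1 n, (n / (M * A)) : ℕ) : ℝ) := Nat.cast_le.mpr hnat
    _ = 4 * ∑ A ∈ Finset.Icc 1 n, ((n / (M * A) : ℕ) : ℝ) := by push_cast; ring
    _ ≤ 4 * ∑ A ∈ Finset.Icc 1 n, (n : ℝ) / (M * A) := by
        apply mul_le_mul_of_nonneg_left ?_ (by norm_num)
        apply Finset.sum_le_sum
        intro A _
        calc ((n / (M * A) : ℕ) : ℝ) ≤ (n : ℝ) / ((M * A : ℕ) : ℝ) := Nat.cast_div_le
          _ = (n : ℝ) / (M * A) := by push_cast; ring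
    _ = 4 * ((n : ℝ) / M) * ∑ A ∈ Finset.Icc 1 n, ((A : ℝ))⁻¹ := by
        rw [Finset.mul_sum, Finset.mul_sum]
        apply Finset.sum_congr rfl
        intro A _
        field_simp
    _ ≤ 4 * ((n : ℝ) / M) * (1 + Real.log n) := by
        apply mul_le_mul_of_nonneg_left ?_ (by positivity)
        have h1 : ∑ A ∈ Finset.Icc 1 n, ((A : ℝ))⁻¹ = ((harmonic n : ℚ) : ℝ) := by
          rw [harmonic_eq_sum_Icc]
          push_cast
          rfl
        rw [h1]
        exact harmonic_le_one_add_log n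
    _ ≤ 4 * ((n : ℝ) / M) * (4 * Real.log n) := by
        apply mul_le_mul_of_nonneg_left ?_ (by positivity)
        have := Real.log_two_gt_d9
        nlinarith
    _ = 16 * n * Real.log n / M := by
        field_simp
        ring
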